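/- arXiv:1506.03002 — 5 statements merged into one kernel-verified Lean document; each statement's English description precedes it below -/
import Mathlib

section
/- The formal derivative T' of the Catalan generating function satisfies T'·(1 - x·T²) = T³, as an identity of formal power series. -/
open PowerSeries

noncomputable def catalanSeries : PowerSeries ℚ :=
  PowerSeries.mk fun k => (catalan k : ℚ)

lemma catalanSeries_eq : _root_.catalanSeries = 1 + PowerSeries.X * _root_.catalanSeries ^ 2 := by
  ext n
  cases n with
  | zero => simp [_root_.catalanSeries]
  | succ n =>
    rw [map_add, coeff_succ_X_mul]
    simp only [_root_.catalanSeries, coeff_mk, sq, coeff_mul, coeff_one, Nat.succ_ne_zero, if_false,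
      zero_add]
    rw [catalan_succ']
    push_cast
    rfl

theorem catalanSeries_derivative_equation :
    (d⁄dX ℚ _root_.catalanSeries) * (1 - PowerSeries.X * _root_.catalanSeries ^ 2) =
      _root_.catalanSeries ^ 3 := by
  set T := _root_.catalanSeries with hTdef
  have hT : T = 1 + PowerSeries.X * T ^ 2 := _root_.catalanSeries_eq
  have hD : d⁄dX ℚ T = T ^ 2 + 2 * PowerSeries.X * T * d⁄dX ℚ T := by
    nth_rewrite 1 [hT]
    rw [map_add, Derivation.map_one_eq_zero, Derivation.leibniz, Derivation.leibniz_pow, derivative_X]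
    simp only [smul_eq_mul]
    ring
  have h2 : (d⁄dX ℚ T) * (1 - 2 * PowerSeries.X * T) = T ^ 2 := by
    linear_combination hD
  have h3 : 1 - PowerSeries.X * T ^ 2 = (1 - 2 * PowerSeries.X * T) * T := by
    linear_combination -hT
  rw [h3, ← mul_assoc, h2]
  ring
end

section
/- The second formal derivative of the Catalan generating function satisfies T''·(1 - x·T²)³ = 2T⁵·(1 - x·T²) + 2T⁵, as an identity of formal power series. -/
open PowerSeries

theorem catalanSeries_second_derivative_equation :
    (d⁄dX ℚ (d⁄dX ℚ _root_.catalanSeries)) * (1 - PowerSeries.X * _root_.catalanSeries ^ 2) ^ 3 =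
      2 * _root_.catalanSeries ^ 5 * (1 - PowerSeries.X * _root_.catalanSeries ^ 2)
        + 2 * _root_.catalanSeries ^ 5 := by
  set T := _root_.catalanSeries
  set T' := d⁄dX ℚ T with hT'def
  set T'' := d⁄dX ℚ T' with hT''def
  have hT : T = 1 + PowerSeries.X * T ^ 2 := catalanSeries_eq
  have h1 := congrArg (d⁄dX ℚ) hT
  simp only [map_add, Derivation.map_one_eq_zero, Derivation.leibniz, sq, derivative_X,
    smul_eq_mul, mul_one, zero_add, ← hT'def] at h1
  have h2 := congrArg (d⁄dX ℚ) h1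
  simp only [map_add, Derivation.leibniz, derivative_X, smul_eq_mul, mul_one,
    ← hT'def, ← hT''def] at h2
  have hA : T' * (1 - PowerSeries.X * T ^ 2) = T ^ 3 := by
    linear_combination T * h1 - T' * hT
  have hC : T'' * (1 - PowerSeries.X * T ^ 2) =
      4 * T ^ 2 * T' + 2 * PowerSeries.X * T * T' ^ 2 := by
    linear_combination T * h2 - T'' * hT
  linear_combination (1 - PowerSeries.X * T ^ 2) ^ 2 * hC +
    (4 * T ^ 2 * (1 - PowerSeries.X * T ^ 2) +
      2 * PowerSeries.X * T * (T' * (1 - PowerSeries.X * T ^ 2) + T ^ 3)) * hA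
end

section
/- The generating series identity Σ_{k≥0} (k(k+1)/2)·Cat(k)·x^k = x·T³/(1 - x·T²)³ holds, i.e. (x²/2)·T'' + x·T' = x·T³/(1-xT²)³ as formal power series. -/
open PowerSeries
lemma hT : _root_.catalanSeries = 1 + X * _root_.catalanSeries ^ 2 := by
  ext n
  rw [map_add]
  cases n with
  | zero => simp [_root_.catalanSeries]
  | succ n =>
    rw [pow_two, coeff_succ_X_mul, coeff_mul]
    simp [_root_.catalanSeries, catalan_succ, Finset.Nat.sum_antidiagonal_eq_sum_range_succ_mk]
    rw [Finset.sum_range]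

lemma hB : d⁄dX ℚ _root_.catalanSeries =
    _root_.catalanSeries ^ 2 + 2 * X * _root_.catalanSeries * d⁄dX ℚ _root_.catalanSeries := by
  have h := congrArg (d⁄dX ℚ) hT
  simp only [map_add, map_one, Derivation.map_one_eq_zero, Derivation.leibniz,
    Derivation.leibniz_pow, derivative_X, smul_eq_mul, map_one] at h
  linear_combination h

lemma hCder : d⁄dX ℚ (d⁄dX ℚ _root_.catalanSeries) =
    4 * _root_.catalanSeries * d⁄dX ℚ _root_.catalanSeries + 2 * X * (d⁄dX ℚ _root_.catalanSeries) ^ 2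
      + 2 * X * _root_.catalanSeries * d⁄dX ℚ (d⁄dX ℚ _root_.catalanSeries) := by
  have h := congrArg (d⁄dX ℚ) hB
  simp only [map_add, Derivation.leibniz, Derivation.leibniz_pow, derivative_X,
    smul_eq_mul, map_one, map_ofNat, mul_one] at h
  have hz : d⁄dX ℚ (2 : ℚ⟦X⟧) = 0 := by
    rw [show (2 : ℚ⟦X⟧) = PowerSeries.C (2 : ℚ) from (map_ofNat _ 2).symm, derivative_C]
  linear_combination h + _root_.catalanSeries * (d⁄dX ℚ _root_.catalanSeries) * X * hz

lemma part2 :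
    PowerSeries.C (1/2 : ℚ) * PowerSeries.X ^ 2 * (d⁄dX ℚ (d⁄dX ℚ _root_.catalanSeries))
        + PowerSeries.X * (d⁄dX ℚ _root_.catalanSeries) =
      (PowerSeries.mk fun k => (k * (k + 1) / 2 : ℚ) * (catalan k : ℚ)) := by
  ext n
  rw [map_add, mul_assoc, coeff_C_mul]
  match n with
  | 0 => simp
  | 1 =>
    simp [coeff_X_pow_mul', coeff_derivative, _root_.catalanSeries]
  | (n+2) =>
    rw [show n+2 = n+1+1 from rfl, coeff_succ_X_mul,
      show n+1+1 = n+2 from rfl, coeff_X_pow_mul]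
    simp [coeff_derivative, _root_.catalanSeries]
    ring

theorem case_one_series :
    (PowerSeries.mk fun k => (k * (k + 1) / 2 : ℚ) * (catalan k : ℚ)) *
        (1 - PowerSeries.X * _root_.catalanSeries ^ 2) ^ 3 =
      PowerSeries.X * _root_.catalanSeries ^ 3 ∧
    PowerSeries.C (1/2 : ℚ) * PowerSeries.X ^ 2 * (d⁄dX ℚ (d⁄dX ℚ _root_.catalanSeries))
        + PowerSeries.X * (d⁄dX ℚ _root_.catalanSeries) =
      (PowerSeries.mk fun k => (k * (k + 1) / 2 : ℚ) * (catalan k : ℚ)) := by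
  refine ⟨?_, part2⟩
  rw [← part2]
  set t := _root_.catalanSeries with ht
  set d := d⁄dX ℚ _root_.catalanSeries with hd
  set e := d⁄dX ℚ (d⁄dX ℚ _root_.catalanSeries) with he
  set x := (X : ℚ⟦X⟧) with hx
  set c := PowerSeries.C (1/2 : ℚ) with hcdef
  have hA : x * t ^ 2 = t - 1 := by linear_combination -hT
  have hP : d * (2 - t) = t ^ 3 := by linear_combination t * hB + 2 * d * hA
  have hQ : e * (2 - t) = d ^ 2 + 3 * t ^ 2 * d := by
    linear_combination t * hCder + 2 * e * hA - d * hB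
  have key : (1 : ℚ⟦X⟧) - x * t ^ 2 = 2 - t := by linear_combination -hA
  rw [key]
  have h2 : (2 : ℚ⟦X⟧) ≠ 0 := by
    intro h
    have := congrArg (constantCoeff) h
    rw [map_ofNat] at this; norm_num at this
  refine mul_left_cancel₀ h2 ?_
  have hc : (2 : ℚ⟦X⟧) * c = 1 := by
    rw [hcdef, show (2 : ℚ⟦X⟧) = PowerSeries.C (2 : ℚ) from (map_ofNat _ 2).symm, ← map_mul]
    norm_num
  linear_combination (x^2*(2-t)^2) * hQ
    + (x^2*((2-t)*d + t^3) + 3*x^2*t^2*(2-t) + 2*x*(2-t)^2) * hP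
    + (t^2*(x*t^2+t-1) + 3*t*(2-t)*(x*t^2+t-1) + 2*t*(t^2-4*t+3)) * hA
    + (x^2*e*(2-t)^3) * hc
end

section
/- As formal power series, Σ_{k≥2} ( Σ_{p₁+p₂+p₃+p₄ = k-2} (2p₁+1)·Cat(p₁)·Cat(p₂)·Cat(p₃)·Cat(p₄) ) x^k = x²·T⁵/(1 - x·T²). -/
open PowerSeries

open Finset in
lemma coeff_prod_fin (k : ℕ) (f : Fin k → PowerSeries ℚ) (n : ℕ) :
    PowerSeries.coeff n (∏ i, f i) =
      ∑ p ∈ Finset.Nat.antidiagonalTuple k n, ∏ i, PowerSeries.coeff (p i) (f i) := by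
  rw [PowerSeries.coeff_prod]
  refine Finset.sum_nbij' (fun l => ⇑l) (fun p => Finsupp.equivFunOnFinite.symm p) ?_ ?_ ?_ ?_ ?_
  · intro l hl
    simp only [Finset.mem_finsuppAntidiag] at hl
    simpa [Finset.Nat.mem_antidiagonalTuple] using hl.1
  · intro p hp
    simp only [Finset.Nat.mem_antidiagonalTuple] at hp
    simp only [Finset.mem_finsuppAntidiag]
    constructor
    · simpa [Finsupp.sum_fintype] using hp
    · exact Finset.subset_univ _
  · intro l _; ext i; simp
  · intro p _; ext i; simp
  · intro l _; rfl

lemma deriv_catalanSeries :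
    (PowerSeries.derivative ℚ _root_.catalanSeries) * (1 - 2 * PowerSeries.X * _root_.catalanSeries) =
      _root_.catalanSeries ^ 2 := by
  have h := congrArg (PowerSeries.derivative ℚ) catalanSeries_eq
  rw [map_add, Derivation.map_one_eq_zero, Derivation.leibniz, Derivation.leibniz_pow,
    PowerSeries.derivative_X] at h
  simp only [smul_eq_mul, nsmul_eq_mul, Nat.cast_ofNat, pow_one, smul_eq_mul] at h
  norm_num at h
  linear_combination h

lemma oddSeries_eq :
    (PowerSeries.mk fun p => ((2 * p + 1 : ℕ) : ℚ) * (catalan p : ℚ)) =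
      _root_.catalanSeries + 2 * PowerSeries.X * PowerSeries.derivative ℚ _root_.catalanSeries := by
  ext n
  cases n with
  | zero => simp [_root_.catalanSeries]
  | succ n =>
    rw [map_add, PowerSeries.coeff_mk,
      show (2 : ℚ⟦X⟧) * PowerSeries.X * PowerSeries.derivative ℚ _root_.catalanSeries =
        PowerSeries.X * (PowerSeries.derivative ℚ _root_.catalanSeries +
          PowerSeries.derivative ℚ _root_.catalanSeries) by ring,
      PowerSeries.coeff_succ_X_mul, map_add, PowerSeries.coeff_derivative]
    simp only [_root_.catalanSeries, PowerSeries.coeff_mk]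
    push_cast
    ring

theorem case_two_series :
    (PowerSeries.mk fun k =>
        if k < 2 then (0 : ℚ)
        else ∑ p ∈ Finset.Nat.antidiagonalTuple 4 (k - 2),
          ((2 * p 0 + 1 : ℕ) : ℚ) * (catalan (p 0) : ℚ) * (catalan (p 1) : ℚ) *
            (catalan (p 2) : ℚ) * (catalan (p 3) : ℚ)) *
      (1 - PowerSeries.X * _root_.catalanSeries ^ 2) =
      PowerSeries.X ^ 2 * _root_.catalanSeries ^ 5 := by
  set T := _root_.catalanSeries
  set D := PowerSeries.derivative ℚ T with hDdef
  set B := PowerSeries.mk fun p => ((2 * p + 1 : ℕ) : ℚ) * (catalan p : ℚ) with hBdef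
  have hmk : (PowerSeries.mk fun k =>
        if k < 2 then (0 : ℚ)
        else ∑ p ∈ Finset.Nat.antidiagonalTuple 4 (k - 2),
          ((2 * p 0 + 1 : ℕ) : ℚ) * (catalan (p 0) : ℚ) * (catalan (p 1) : ℚ) *
            (catalan (p 2) : ℚ) * (catalan (p 3) : ℚ)) =
      PowerSeries.X ^ 2 * (B * T ^ 3) := by
    ext k
    rw [PowerSeries.coeff_mk, PowerSeries.coeff_X_pow_mul']
    by_cases hk : k < 2
    · rw [if_pos hk, if_neg (by omega)]
    · rw [if_neg hk, if_pos (by omega)]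
      have : B * T ^ 3 = ∏ i, ![B, T, T, T] i := by
        rw [Fin.prod_univ_four]; simp; ring
      rw [this, coeff_prod_fin]
      refine Finset.sum_congr rfl fun p _ => ?_
      rw [Fin.prod_univ_four]
      simp only [Matrix.cons_val_zero, Matrix.cons_val_one, Matrix.head_cons,
        Matrix.cons_val_two, Matrix.cons_val_three, Matrix.tail_cons, hBdef,
        T, _root_.catalanSeries, PowerSeries.coeff_mk]
  have hB2 : B = T + 2 * PowerSeries.X * D := oddSeries_eq
  rw [hmk, hB2]
  have h1 : T = 1 + PowerSeries.X * T ^ 2 := catalanSeries_eq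
  have h2 : D * (1 - 2 * PowerSeries.X * T) = T ^ 2 := deriv_catalanSeries
  linear_combination (PowerSeries.X ^ 2 * T ^ 3 * (-T - 2 * PowerSeries.X * D)) * h1 +
    (PowerSeries.X ^ 2 * T ^ 3 * 2 * PowerSeries.X * T) * h2
end

section
/- The 2l-th moment of the semicircle distribution with density (1/(2π))√(4-x²) on [-2,2] equals the Catalan number Cat(l), and all odd moments vanish. -/
open Real


lemma wallis_prod (l : ℕ) :
    (∏ i ∈ Finset.range l, (2 * (i : ℝ) + 1) / (2 * i + 2))
      = (Nat.centralBinom l : ℝ) / 4 ^ l := by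
  induction l with
  | zero => simp [Nat.centralBinom]
  | succ k ih =>
    rw [Finset.prod_range_succ, ih]
    have h' : ((k : ℝ) + 1) * (Nat.centralBinom (k + 1) : ℝ)
        = 2 * (2 * k + 1) * Nat.centralBinom k := by
      exact_mod_cast Nat.succ_mul_centralBinom_succ k
    field_simp
    rw [pow_succ]
    linear_combination (-2 * (4:ℝ) ^ k) * h'

lemma sin_pow_even_symm (n : ℕ) :
    (∫ x in (-(π/2))..(π/2), sin x ^ (2 * n))
      = π * ∏ i ∈ Finset.range n, (2 * (i : ℝ) + 1) / (2 * i + 2) := by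
  induction n with
  | zero => simp [two_mul]
  | succ k ih =>
    rw [Finset.prod_range_succ_comm, mul_left_comm, ← ih, Nat.mul_succ, integral_sin_pow]
    simp [Real.cos_pi_div_two]

lemma key_integral (l : ℕ) :
    (∫ x in (-2 : ℝ)..2, x ^ (2 * l) * Real.sqrt (4 - x ^ 2))
      = 2 * π * catalan l := by
  have hg : Continuous fun x : ℝ => x ^ (2 * l) * Real.sqrt (4 - x ^ 2) := by
    fun_prop
  have hsub :=
    intervalIntegral.integral_comp_smul_deriv
        (a := -(π/2)) (b := π/2)
        (f := fun θ => 2 * Real.sin θ) (f' := fun θ => 2 * Real.cos θ)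
        (g := fun x : ℝ => x ^ (2 * l) * Real.sqrt (4 - x ^ 2))
        (fun x _ => by simpa using (Real.hasDerivAt_sin x).const_mul 2)
        (by fun_prop) hg
  norm_num [Function.comp] at hsub
  rw [← hsub]
  have hcongr : ∀ θ ∈ Set.uIcc (-(π/2)) (π/2),
      (2 * Real.cos θ) * ((2 * Real.sin θ) ^ (2 * l)
          * Real.sqrt (4 - (2 * Real.sin θ) ^ 2))
        = 4 ^ (l + 1) * (Real.sin θ ^ (2 * l) - Real.sin θ ^ (2 * (l + 1))) := by
    intro θ hθ
    have hθ' : θ ∈ Set.Icc (-(π/2)) (π/2) := by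
      rwa [Set.uIcc_of_le (by linarith [pi_pos])] at hθ
    have hcos : 0 ≤ Real.cos θ := Real.cos_nonneg_of_mem_Icc hθ'
    have hs : Real.sqrt (4 - (2 * Real.sin θ) ^ 2) = 2 * Real.cos θ := by
      have h4 : 4 - (2 * Real.sin θ) ^ 2 = (2 * Real.cos θ) ^ 2 := by
        have := Real.sin_sq_add_cos_sq θ
        nlinarith
      rw [h4, Real.sqrt_sq (by positivity)]
    have hc2 : Real.cos θ ^ 2 = 1 - Real.sin θ ^ 2 := by
      have := Real.sin_sq_add_cos_sq θ; linarith
    rw [hs, pow_mul, pow_mul, pow_mul]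
    linear_combination (4 * 4 ^ l * (Real.sin θ ^ 2) ^ l) * hc2
  rw [intervalIntegral.integral_congr hcongr]
  have hint : ∀ n : ℕ, IntervalIntegrable (fun θ => Real.sin θ ^ n)
      MeasureTheory.volume (-(π/2)) (π/2) := fun n => by
    apply Continuous.intervalIntegrable; fun_prop
  rw [intervalIntegral.integral_const_mul,
      intervalIntegral.integral_sub (hint _) (hint _),
      sin_pow_even_symm l, sin_pow_even_symm (l + 1), wallis_prod, wallis_prod,
      ]
  have h1 : ((l:ℝ) + 1) * (Nat.centralBinom (l + 1) : ℝ)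
      = 2 * (2 * l + 1) * Nat.centralBinom l := by
    exact_mod_cast Nat.succ_mul_centralBinom_succ l
  have h2 : ((l:ℝ) + 1) * (catalan l : ℝ) = Nat.centralBinom l := by
    exact_mod_cast succ_mul_catalan_eq_centralBinom l
  have hl : ((l:ℝ) + 1) ≠ 0 := by positivity
  have key : 4 * (Nat.centralBinom l : ℝ) - Nat.centralBinom (l + 1)
      = 2 * catalan l := by
    apply mul_left_cancel₀ hl
    linear_combination (-1 : ℝ) * h1 + (-2:ℝ) * h2
  have h4 : (4:ℝ) ^ l ≠ 0 := by positivity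
  field_simp
  linear_combination ((4:ℝ) ^ l) * key

/-- The even moments of the semicircle law are the Catalan numbers and the odd
moments vanish. -/
theorem semicircle_moments (l : ℕ) :
    (∫ x in (-2 : ℝ)..2, x ^ (2 * l) * (1 / (2 * π) * Real.sqrt (4 - x ^ 2)))
        = (catalan l : ℝ) ∧
      (∫ x in (-2 : ℝ)..2, x ^ (2 * l + 1) * (1 / (2 * π) * Real.sqrt (4 - x ^ 2)))
        = 0 := by
  constructor
  · have hre : (∫ x in (-2 : ℝ)..2, x ^ (2 * l) * (1 / (2 * π) * Real.sqrt (4 - x ^ 2)))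
        = 1 / (2 * π) * ∫ x in (-2 : ℝ)..2, x ^ (2 * l) * Real.sqrt (4 - x ^ 2) := by
      rw [← intervalIntegral.integral_const_mul]
      apply intervalIntegral.integral_congr
      intro x _
      ring
    rw [hre, key_integral]
    have hπ : π ≠ 0 := pi_ne_zero
    field_simp
  · set f : ℝ → ℝ := fun x => x ^ (2 * l + 1) * (1 / (2 * π) * Real.sqrt (4 - x ^ 2))
      with hf
    have hodd : ∀ x : ℝ, f (-x) = -f x := by
      intro x
      simp only [hf]
      rw [show (-x) ^ 2 = x ^ 2 by ring, Odd.neg_pow ⟨l, by ring⟩]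
      ring
    have h1 : (∫ x in (-2 : ℝ)..2, f (-x)) = ∫ x in (-2 : ℝ)..2, f x := by
      rw [intervalIntegral.integral_comp_neg]
      norm_num
    have h2 : (∫ x in (-2 : ℝ)..2, f (-x)) = -∫ x in (-2 : ℝ)..2, f x := by
      simp_rw [hodd]
      exact intervalIntegral.integral_neg
    have := h1.symm.trans h2
    linarith [this]
end
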